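/- For every r ∈ (0,1) and every ρ > 0, the function H_{r,ρ} is a probability density on [0,∞): ∫_0^∞ H_{r,ρ}(x) dx = 1. -/

import Mathlib

noncomputable def psi (r : ℝ) : ℝ :=
  Real.sqrt (2 / Real.pi) * ∏' n : ℕ, (1 - r ^ (2 * n + 2)) / (1 - r ^ (2 * n + 1))

noncomputable def H (r ρ x : ℝ) : ℝ :=
  (Real.sqrt (2 * ρ / Real.pi) / ∏' n : ℕ, (1 - r ^ (2 * n + 1))) *
    ∑' n : ℕ,
      (r ^ (-(2 * (n : ℤ))) / ∏ k ∈ Finset.Icc 1 n, (1 - r ^ (-(2 * (k : ℤ))))) *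
        Real.exp (-ρ * r ^ (-(2 * (n : ℤ))) * x ^ 2 / 2)

open Real Filter Finset Topology


noncomputable def Qp (r : ℝ) (n : ℕ) : ℝ := ∏ k ∈ Finset.Icc 1 n, (1 - r ^ (2*k))

noncomputable def gg (r z : ℝ) (n : ℕ) : ℝ := z ^ n * r ^ (n*n) / (r ^ n * Qp r n)

noncomputable def ff (r z : ℝ) : ℝ := ∑' n, gg r z n

variable {r : ℝ}

lemma Qp_pos (hr0 : 0 < r) (hr1 : r < 1) (n : ℕ) : 0 < Qp r n := by
  refine Finset.prod_pos fun k hk => ?_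
  have hk1 : 1 ≤ k := (Finset.mem_Icc.1 hk).1
  have : r ^ (2*k) < 1 := pow_lt_one₀ hr0.le hr1 (by omega)
  linarith

lemma Qp_succ (n : ℕ) : Qp r (n+1) = Qp r n * (1 - r ^ (2*(n+1))) := by
  rw [Qp, Qp, Finset.prod_Icc_succ_top (by omega)]

lemma gg_zero (z : ℝ) : gg r z 0 = 1 := by simp [gg, Qp]

lemma one_sub_pow_pos (hr0 : 0 < r) (hr1 : r < 1) {m : ℕ} (hm : m ≠ 0) :
    0 < 1 - r ^ m := by
  have : r ^ m < 1 := pow_lt_one₀ hr0.le hr1 hm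
  linarith

lemma gg_succ (hr0 : 0 < r) (hr1 : r < 1) (z : ℝ) (n : ℕ) :
    gg r z (n+1) = z * r ^ (2*n) / (1 - r ^ (2*(n+1))) * gg r z n := by
  have h1 : Qp r n ≠ 0 := (Qp_pos hr0 hr1 n).ne'
  have h2 : (1 : ℝ) - r ^ (2*(n+1)) ≠ 0 := (one_sub_pow_pos hr0 hr1 (by omega)).ne'
  have h3 : r ≠ 0 := hr0.ne'
  rw [gg, gg, Qp_succ]
  field_simp
  ring

lemma gg_step (hr0 : 0 < r) (hr1 : r < 1) (z : ℝ) (n : ℕ) :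
    gg r z (n+1) = gg r (z*r^2) (n+1) + z * gg r (z*r^2) n := by
  have h1 : Qp r n ≠ 0 := (Qp_pos hr0 hr1 n).ne'
  have h2 : (1 : ℝ) - r ^ (2*(n+1)) ≠ 0 := (one_sub_pow_pos hr0 hr1 (by omega)).ne'
  have h3 : r ≠ 0 := hr0.ne'
  rw [gg, gg, gg, Qp_succ]
  field_simp
  ring

lemma gg_abs (hr0 : 0 < r) (hr1 : r < 1) (z : ℝ) (n : ℕ) :
    |gg r z n| = |z| ^ n * gg r 1 n := by
  have h1 : 0 < Qp r n := Qp_pos hr0 hr1 n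
  have h2 : (0:ℝ) < r ^ n := pow_pos hr0 n
  rw [gg, gg, abs_div, abs_mul, abs_pow, abs_pow, abs_of_pos hr0,
    abs_of_pos (mul_pos h2 h1)]
  ring

lemma gg_one_pos (hr0 : 0 < r) (hr1 : r < 1) (n : ℕ) : 0 < gg r 1 n := by
  have h1 : 0 < Qp r n := Qp_pos hr0 hr1 n
  have h2 : (0:ℝ) < r ^ n := pow_pos hr0 n
  have h3 : (0:ℝ) < r ^ (n*n) := pow_pos hr0 _
  rw [gg]
  positivity

lemma gg_summable (hr0 : 0 < r) (hr1 : r < 1) (z : ℝ) : Summable (gg r z) := by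
  apply summable_of_ratio_norm_eventually_le (show (1:ℝ)/2 < 1 by norm_num)
  have hr2 : (0:ℝ) < 1 - r ^ 2 := one_sub_pow_pos hr0 hr1 (by omega)
  have htend : Tendsto (fun n : ℕ => |z| * r ^ (2*n) / (1 - r ^ 2)) atTop (𝓝 0) := by
    have h0 : Tendsto (fun n : ℕ => (r^2) ^ n) atTop (𝓝 0) :=
      tendsto_pow_atTop_nhds_zero_of_lt_one (by positivity) (by nlinarith)
    have : Tendsto (fun n : ℕ => |z| * (r^2) ^ n / (1 - r ^ 2)) atTop (𝓝 (|z| * 0 / (1 - r^2))) :=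
      (h0.const_mul _).div_const _
    simpa [← pow_mul] using this
  have hev : ∀ᶠ n : ℕ in atTop, |z| * r ^ (2*n) / (1 - r ^ 2) ≤ 1/2 :=
    htend.eventually (ge_mem_nhds (by norm_num))
  filter_upwards [hev] with n hn
  have hQ : (0:ℝ) < 1 - r ^ (2*(n+1)) := one_sub_pow_pos hr0 hr1 (by omega)
  have hle : 1 - r ^ 2 ≤ 1 - r ^ (2*(n+1)) := by
    have : r ^ (2*(n+1)) ≤ r ^ 2 := pow_le_pow_of_le_one hr0.le hr1.le (by omega)
    linarith
  rw [Real.norm_eq_abs, Real.norm_eq_abs, gg_succ hr0 hr1, abs_mul, abs_div, abs_mul,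
    abs_of_pos hQ, abs_pow, abs_of_pos hr0]
  have hggn : (0:ℝ) ≤ |gg r z n| := abs_nonneg _
  have key : |z| * r ^ (2*n) / (1 - r ^ (2*(n+1))) ≤ 1/2 := by
    calc |z| * r ^ (2*n) / (1 - r ^ (2*(n+1))) ≤ |z| * r ^ (2*n) / (1 - r^2) := by
          apply div_le_div_of_nonneg_left (by positivity) hr2 hle
      _ ≤ 1/2 := hn
  calc |z| * r ^ (2*n) / (1 - r ^ (2*(n+1))) * |gg r z n|
      ≤ 1/2 * |gg r z n| := mul_le_mul_of_nonneg_right key hggn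

lemma ff_funcEq (hr0 : 0 < r) (hr1 : r < 1) (z : ℝ) :
    ff r z = (1+z) * ff r (z*r^2) := by
  have hs := gg_summable hr0 hr1 z
  have hs' := gg_summable hr0 hr1 (z*r^2)
  have hs1 : Summable (fun n => gg r (z*r^2) (n+1)) := (summable_nat_add_iff 1).2 hs'
  have hs2 : Summable (fun n => z * gg r (z*r^2) n) := hs'.mul_left z
  have e1 : ff r z = 1 + ∑' n, gg r z (n+1) := by
    rw [ff, Summable.tsum_eq_zero_add hs, gg_zero]
  have e2 : ff r (z*r^2) = 1 + ∑' n, gg r (z*r^2) (n+1) := by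
    rw [ff, Summable.tsum_eq_zero_add hs', gg_zero]
  have e3 : ∑' n, gg r z (n+1) = (∑' n, gg r (z*r^2) (n+1)) + ∑' n, z * gg r (z*r^2) n := by
    rw [← Summable.tsum_add hs1 hs2]
    exact tsum_congr fun n => gg_step hr0 hr1 z n
  have e4 : ∑' n, z * gg r (z*r^2) n = z * ff r (z*r^2) := tsum_mul_left
  rw [e1, e3, e4]
  have := e2
  linarith [e2, mul_comm z (ff r (z*r^2))]

lemma ff_iter (hr0 : 0 < r) (hr1 : r < 1) (N : ℕ) :
    ff r (-r) = (∏ k ∈ Finset.range N, (1 - r ^ (2*k+1))) * ff r (-r * r ^ (2*N)) := by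
  induction N with
  | zero => simp
  | succ N ih =>
    rw [ih, Finset.prod_range_succ]
    have h := ff_funcEq hr0 hr1 (-r * r ^ (2*N))
    have e1 : (1 : ℝ) + (-r * r ^ (2*N)) = 1 - r ^ (2*N+1) := by
      rw [pow_succ']
      ring
    have e2 : (-r * r ^ (2*N)) * r ^ 2 = -r * r ^ (2*(N+1)) := by
      rw [show 2*(N+1) = 2*N + 2 by ring, pow_add]
      ring
    rw [e1, e2] at h
    rw [h]
    ring

lemma ff_sub_one_bound (hr0 : 0 < r) (hr1 : r < 1) (w : ℝ) (hw : |w| ≤ 1) :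
    |ff r w - 1| ≤ (∑' n, gg r 1 (n+1)) * |w| := by
  have hs := gg_summable hr0 hr1 w
  have hs1 : Summable (fun n => gg r w (n+1)) := (summable_nat_add_iff 1).2 hs
  have hsone : Summable (fun n => gg r 1 (n+1)) :=
    (summable_nat_add_iff 1).2 (gg_summable hr0 hr1 1)
  have e1 : ff r w - 1 = ∑' n, gg r w (n+1) := by
    rw [ff, Summable.tsum_eq_zero_add hs, gg_zero]; ring
  rw [e1]
  have habs : Summable (fun n => |gg r w (n+1)|) := by
    simpa using hs1.abs
  calc |∑' n, gg r w (n+1)| ≤ ∑' n, |gg r w (n+1)| := by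
        simpa using norm_tsum_le_tsum_norm (f := fun n => gg r w (n+1)) (by simpa using hs1.abs)
    _ ≤ ∑' n, |w| * gg r 1 (n+1) := by
        apply Summable.tsum_le_tsum _ habs (hsone.mul_left _)
        intro n
        rw [gg_abs hr0 hr1]
        have h1 : |w| ^ (n+1) ≤ |w| := pow_le_of_le_one (abs_nonneg _) hw (by omega)
        exact mul_le_mul_of_nonneg_right h1 (gg_one_pos hr0 hr1 _).le
    _ = (∑' n, gg r 1 (n+1)) * |w| := by rw [tsum_mul_left]; ring

lemma ff_tail_tendsto (hr0 : 0 < r) (hr1 : r < 1) :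
    Tendsto (fun N : ℕ => ff r (-r * r ^ (2*N))) atTop (𝓝 1) := by
  have h0 : Tendsto (fun N : ℕ => ff r (-r * r ^ (2*N)) - 1) atTop (𝓝 0) := by
    apply squeeze_zero_norm (a := fun N => (∑' n, gg r 1 (n+1)) * (r * (r^2) ^ N))
    · intro N
      have hw : |(-r * r ^ (2*N))| ≤ 1 := by
        rw [abs_mul, abs_neg, abs_of_pos hr0, abs_of_pos (pow_pos hr0 _)]
        have : r * r ^ (2*N) = r ^ (2*N+1) := (pow_succ' r _).symm
        rw [this]
        exact (pow_lt_one₀ hr0.le hr1 (by omega)).le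
      have := ff_sub_one_bound hr0 hr1 _ hw
      rw [Real.norm_eq_abs]
      refine this.trans_eq ?_
      rw [abs_mul, abs_neg, abs_of_pos hr0, abs_of_pos (pow_pos hr0 _), ← pow_mul]
    · have h1 : Tendsto (fun N : ℕ => (r^2) ^ N) atTop (𝓝 0) :=
        tendsto_pow_atTop_nhds_zero_of_lt_one (by positivity) (by nlinarith)
      have := ((h1.const_mul r).const_mul (∑' n, gg r 1 (n+1)))
      simpa using this
  have := h0.add_const 1
  simpa using this

lemma log_summable (hr0 : 0 < r) (hr1 : r < 1) :
    Summable (fun n : ℕ => Real.log (1 - r ^ (2*n+1))) := by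
  have hx : ∀ n : ℕ, 0 < 1 - r ^ (2*n+1) := fun n => one_sub_pow_pos hr0 hr1 (by omega)
  have hxr : ∀ n : ℕ, r ^ (2*n+1) ≤ r := fun n => pow_le_of_le_one hr0.le hr1.le (by omega)
  apply summable_abs_iff.mp
  have hb : Summable (fun n : ℕ => r * (r^2)^n / (1 - r)) := by
    apply Summable.div_const
    exact (summable_geometric_of_lt_one (by positivity) (by nlinarith)).mul_left r
  apply hb.of_nonneg_of_le (fun n => abs_nonneg _)
  intro n
  have h1 : Real.log (1 - r ^ (2*n+1)) ≤ 0 :=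
    Real.log_nonpos (hx n).le (by nlinarith [pow_pos hr0 (2*n+1)])
  rw [abs_of_nonpos h1]
  have h2 : -Real.log (1 - r ^ (2*n+1)) = Real.log (1 - r ^ (2*n+1))⁻¹ :=
    (Real.log_inv _).symm
  rw [h2]
  have h3 : Real.log (1 - r ^ (2*n+1))⁻¹ ≤ (1 - r ^ (2*n+1))⁻¹ - 1 :=
    Real.log_le_sub_one_of_pos (inv_pos.mpr (hx n))
  have h4 : (1 - r ^ (2*n+1))⁻¹ - 1 = r ^ (2*n+1) / (1 - r ^ (2*n+1)) := by
    rw [eq_div_iff (hx n).ne', sub_mul, inv_mul_cancel₀ (hx n).ne']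
    ring
  have h5 : r ^ (2*n+1) / (1 - r ^ (2*n+1)) ≤ r ^ (2*n+1) / (1 - r) := by
    apply div_le_div_of_nonneg_left (by positivity) (by linarith) (by linarith [hxr n])
  have h6 : r ^ (2*n+1) = r * (r^2)^n := by rw [← pow_mul]; ring
  calc Real.log (1 - r ^ (2*n+1))⁻¹ ≤ r ^ (2*n+1) / (1 - r ^ (2*n+1)) := by rw [← h4]; exact h3
    _ ≤ r ^ (2*n+1) / (1 - r) := h5
    _ = r * (r^2)^n / (1 - r) := by rw [h6]

lemma Pr_hasProd (hr0 : 0 < r) (hr1 : r < 1) :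
    HasProd (fun n : ℕ => 1 - r ^ (2*n+1)) (∏' n : ℕ, (1 - r ^ (2*n+1))) := by
  exact (Real.multipliable_of_summable_log (f := fun n : ℕ => 1 - r ^ (2*n+1))
    (fun n => one_sub_pow_pos hr0 hr1 (by omega)) (log_summable hr0 hr1)).hasProd

lemma Pr_pos (hr0 : 0 < r) (hr1 : r < 1) :
    0 < ∏' n : ℕ, (1 - r ^ (2*n+1)) := by
  have h := Real.rexp_tsum_eq_tprod (f := fun n : ℕ => 1 - r ^ (2*n+1))
    (fun n => one_sub_pow_pos hr0 hr1 (by omega)) (log_summable hr0 hr1)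
  rw [← h]
  exact Real.exp_pos _

lemma Pr_eq_ff (hr0 : 0 < r) (hr1 : r < 1) :
    (∏' n : ℕ, (1 - r ^ (2*n+1))) = ff r (-r) := by
  have t1 : Tendsto (fun N : ℕ => ∏ k ∈ Finset.range N, (1 - r ^ (2*k+1))) atTop
      (𝓝 (∏' n : ℕ, (1 - r ^ (2*n+1)))) := (Pr_hasProd hr0 hr1).tendsto_prod_nat
  have t2 : Tendsto (fun N : ℕ =>
      (∏ k ∈ Finset.range N, (1 - r ^ (2*k+1))) * ff r (-r * r ^ (2*N))) atTop
      (𝓝 ((∏' n : ℕ, (1 - r ^ (2*n+1))) * 1)) := t1.mul (ff_tail_tendsto hr0 hr1)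
  have t3 : Tendsto (fun _ : ℕ => ff r (-r)) atTop (𝓝 (ff r (-r))) := tendsto_const_nhds
  have heq : (fun N : ℕ =>
      (∏ k ∈ Finset.range N, (1 - r ^ (2*k+1))) * ff r (-r * r ^ (2*N))) =
      fun _ : ℕ => ff r (-r) := funext fun N => (ff_iter hr0 hr1 N).symm
  rw [heq] at t2
  have := tendsto_nhds_unique t2 t3
  rw [mul_one] at this
  exact this

noncomputable def aa (r : ℝ) (n : ℕ) : ℝ :=
  r ^ (-(2 * (n:ℤ))) / ∏ k ∈ Finset.Icc 1 n, (1 - r ^ (-(2 * (k:ℤ))))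

lemma zpow_neg_two (hr0 : 0 < r) (m : ℕ) : r ^ (-(2 * (m:ℤ))) = (r ^ (2*m))⁻¹ := by
  rw [show -(2*(m:ℤ)) = -((2*m : ℕ) : ℤ) by push_cast; ring, zpow_neg, zpow_natCast]

lemma D_eq (hr0 : 0 < r) (n : ℕ) :
    (∏ k ∈ Finset.Icc 1 n, (1 - r ^ (-(2 * (k:ℤ))))) =
      (-1)^n * (r ^ (n*(n+1)))⁻¹ * Qp r n := by
  have hrne : r ≠ 0 := hr0.ne'
  induction n with
  | zero => simp [Qp]
  | succ n ih =>
    rw [Finset.prod_Icc_succ_top (by omega : 1 ≤ n + 1), ih, zpow_neg_two hr0 (n+1),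
      Qp_succ]
    have h1 : r ^ (2*(n+1)) ≠ 0 := by positivity
    have h2 : r ^ (n*(n+1)) ≠ 0 := by positivity
    have h3 : r ^ ((n+1)*(n+1+1)) ≠ 0 := by positivity
    field_simp
    ring

lemma aa_eq (hr0 : 0 < r) (hr1 : r < 1) (n : ℕ) :
    aa r n * r ^ n = gg r (-r) n := by
  have hrne : r ≠ 0 := hr0.ne'
  have hQ : Qp r n ≠ 0 := (Qp_pos hr0 hr1 n).ne'
  rw [aa, D_eq hr0, zpow_neg_two hr0 n, gg, neg_pow]
  have h1 : r ^ (2*n) ≠ 0 := by positivity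
  have h2 : r ^ (n*(n+1)) ≠ 0 := by positivity
  have h3 : ((-1:ℝ))^n ≠ 0 := pow_ne_zero n (by norm_num)
  field_simp
  ring_nf
  rw [show n*2 = 2*n by ring, pow_mul]
  norm_num

theorem stmt2' (r ρ : ℝ) (hr0 : 0 < r) (hr1 : r < 1) (hρ : 0 < ρ) :
    ∫ x in Set.Ioi (0 : ℝ),
      ((Real.sqrt (2 * ρ / Real.pi) / ∏' n : ℕ, (1 - r ^ (2 * n + 1))) *
        ∑' n : ℕ, aa r n * Real.exp (-ρ * r ^ (-(2 * (n : ℤ))) * x ^ 2 / 2)) = 1 := by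
  have hπ := Real.pi_pos
  set P := ∏' n : ℕ, (1 - r ^ (2 * n + 1)) with hPdef
  have hP : 0 < P := Pr_pos hr0 hr1
  set b : ℕ → ℝ := fun n => ρ * r ^ (-(2*(n:ℤ))) / 2 with hbdef
  have hb : ∀ n, 0 < b n := by
    intro n
    have : (0:ℝ) < r ^ (-(2*(n:ℤ))) := by
      rw [zpow_neg_two hr0]; positivity
    simp only [hbdef]; positivity
  have hfun : ∀ n, (fun x : ℝ => aa r n * Real.exp (-(b n) * x ^ 2)) =
      fun x : ℝ => aa r n * Real.exp (-ρ * r ^ (-(2 * (n:ℤ))) * x ^ 2 / 2) := by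
    intro n; funext x; congr 1; rw [hbdef]; ring_nf
  have hint : ∀ n, MeasureTheory.Integrable
      (fun x : ℝ => aa r n * Real.exp (-ρ * r ^ (-(2 * (n:ℤ))) * x ^ 2 / 2))
      (MeasureTheory.volume.restrict (Set.Ioi 0)) := by
    intro n
    rw [← hfun]
    exact ((integrable_exp_neg_mul_sq (hb n)).restrict).const_mul _
  have hsqrt : ∀ n, Real.sqrt (π / b n) = Real.sqrt (2*π/ρ) * r ^ n := by
    intro n
    have h1 : π / b n = (2*π/ρ) * (r^n)^2 := by
      rw [hbdef]
      simp only [zpow_neg_two hr0]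
      rw [← pow_mul]
      have : r ^ (2*n) ≠ 0 := by positivity
      field_simp
      ring
    rw [h1, Real.sqrt_mul (by positivity), Real.sqrt_sq (by positivity)]
  have hval : ∀ n, ∫ x in Set.Ioi (0:ℝ),
      aa r n * Real.exp (-ρ * r ^ (-(2 * (n:ℤ))) * x ^ 2 / 2) =
      gg r (-r) n * (Real.sqrt (2*π/ρ) / 2) := by
    intro n
    rw [← hfun, MeasureTheory.integral_const_mul, integral_gaussian_Ioi, hsqrt,
      ← aa_eq hr0 hr1]
    ring
  have hnormval : ∀ n, ∫ x in Set.Ioi (0:ℝ),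
      ‖aa r n * Real.exp (-ρ * r ^ (-(2 * (n:ℤ))) * x ^ 2 / 2)‖ =
      |gg r (-r) n| * (Real.sqrt (2*π/ρ) / 2) := by
    intro n
    have e : (fun x : ℝ => ‖aa r n * Real.exp (-ρ * r ^ (-(2 * (n:ℤ))) * x ^ 2 / 2)‖) =
        fun x : ℝ => |aa r n| * Real.exp (-(b n) * x ^ 2) := by
      funext x
      rw [norm_mul, Real.norm_eq_abs, Real.norm_eq_abs, abs_of_pos (Real.exp_pos _)]
      congr 2
      simp only [hbdef]
      ring
    rw [show (∫ x in Set.Ioi (0:ℝ), ‖aa r n * Real.exp (-ρ * r ^ (-(2 * (n:ℤ))) * x ^ 2 / 2)‖)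
        = ∫ x in Set.Ioi (0:ℝ), |aa r n| * Real.exp (-(b n) * x ^ 2) by rw [← e],
      MeasureTheory.integral_const_mul, integral_gaussian_Ioi, hsqrt]
    have : |gg r (-r) n| = |aa r n| * r ^ n := by
      rw [← aa_eq hr0 hr1, abs_mul, abs_of_pos (pow_pos hr0 n)]
    rw [this]
    ring
  have hsum : Summable (fun n => ∫ x in Set.Ioi (0:ℝ),
      ‖aa r n * Real.exp (-ρ * r ^ (-(2 * (n:ℤ))) * x ^ 2 / 2)‖) := by
    apply Summable.congr (f := fun n => |gg r (-r) n| * (Real.sqrt (2*π/ρ) / 2))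
    · exact (summable_abs_iff.mpr (gg_summable hr0 hr1 (-r))).mul_right _
    · intro n; rw [hnormval n]
  have hswap := MeasureTheory.integral_tsum_of_summable_integral_norm hint hsum
  rw [MeasureTheory.integral_const_mul, ← hswap]
  have htsum : ∑' n, (∫ x in Set.Ioi (0:ℝ),
      aa r n * Real.exp (-ρ * r ^ (-(2 * (n:ℤ))) * x ^ 2 / 2)) =
      P * (Real.sqrt (2*π/ρ) / 2) := by
    rw [tsum_congr hval, tsum_mul_right, ← ff, ← Pr_eq_ff hr0 hr1]
  rw [htsum]
  have hss : Real.sqrt (2*ρ/π) * Real.sqrt (2*π/ρ) = 2 := by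
    rw [← Real.sqrt_mul (by positivity)]
    rw [show (2*ρ/π) * (2*π/ρ) = 4 by field_simp; ring]
    rw [show (4:ℝ) = 2^2 by norm_num, Real.sqrt_sq (by norm_num)]
  rw [show Real.sqrt (2*ρ/π)/P * (P*(Real.sqrt (2*π/ρ)/2)) =
    (Real.sqrt (2*ρ/π) * Real.sqrt (2*π/ρ)) * (P/P) / 2 by ring, div_self hP.ne', hss]
  norm_num


theorem stmt2 (r ρ : ℝ) (hr0 : 0 < r) (hr1 : r < 1) (hρ : 0 < ρ) :
    ∫ x in Set.Ioi (0 : ℝ), H r ρ x = 1 := by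
  have h : (fun x : ℝ => H r ρ x) = fun x : ℝ =>
      (Real.sqrt (2 * ρ / Real.pi) / ∏' n : ℕ, (1 - r ^ (2 * n + 1))) *
        ∑' n : ℕ, aa r n * Real.exp (-ρ * r ^ (-(2 * (n : ℤ))) * x ^ 2 / 2) := rfl
  calc ∫ x in Set.Ioi (0 : ℝ), H r ρ x
      = ∫ x in Set.Ioi (0 : ℝ),
        ((Real.sqrt (2 * ρ / Real.pi) / ∏' n : ℕ, (1 - r ^ (2 * n + 1))) *
          ∑' n : ℕ, aa r n * Real.exp (-ρ * r ^ (-(2 * (n : ℤ))) * x ^ 2 / 2)) := by rw [← h]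
    _ = 1 := stmt2' r ρ hr0 hr1 hρ
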